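/- Let X be a nonnegative real random variable with a log-concave probability density function f. Then X is moment bounded with parameter L = E[X]; that is, for every integer i ≥ 1, E[X^i] ≤ i · E[X] · E[X^{i−1}]. -/

import Mathlib

open MeasureTheory ProbabilityTheory Set ENNReal

/-- A real random variable `Z` is *moment bounded* with parameter `L > 0` if all its absolute
moments exist and for every integer `i ≥ 1`, `E[|Z|^i] ≤ i·L·E[|Z|^{i-1}]`. -/
def MomentBounded {Ω : Type*} [MeasurableSpace Ω] (P : Measure Ω) (Z : Ω → ℝ) (L : ℝ) : Prop :=
  (∀ i : ℕ, Integrable (fun ω => |Z ω| ^ i) P) ∧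
  ∀ i : ℕ, 1 ≤ i → (∫ ω, |Z ω| ^ i ∂P) ≤ i * L * ∫ ω, |Z ω| ^ (i - 1) ∂P

/-- Key pointwise consequence of log-concavity. -/
lemma logconcave_key (f : ℝ → ℝ) (hf : ∀ x, 0 ≤ f x)
    (hlc : ∀ x y l : ℝ, 0 ≤ l → l ≤ 1 →
      f x ^ l * f y ^ (1 - l) ≤ f (l * x + (1 - l) * y)) :
    ∀ u v s : ℝ, 0 ≤ s → v ≤ u → f (u + s) * f v ≤ f u * f (v + s) := by
  intro u v s hs hvu
  rcases eq_or_lt_of_le (show v ≤ u + s by linarith) with h | h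
  · have hs0 : s = 0 := by nlinarith [hvu, hs]
    have huv : u = v := by nlinarith
    subst hs0; subst huv; simp
  · set T : ℝ := u + s - v with hT
    have hTpos : 0 < T := by simp only [hT]; linarith
    set l : ℝ := (u - v) / T with hl
    have hl0 : 0 ≤ l := div_nonneg (by linarith) hTpos.le
    have hl1 : l ≤ 1 := by
      rw [hl, div_le_one hTpos]; linarith
    have hlT : l * T = u - v := by rw [hl]; exact div_mul_cancel₀ _ hTpos.ne'
    have hcomb1 : l * (u + s) + (1 - l) * v = u := by
      linear_combination hlT - l * hT
    have hcomb2 : (1 - l) * (u + s) + (1 - (1 - l)) * v = v + s := by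
      linear_combination -hlT + l * hT
    have h1 : f (u + s) ^ l * f v ^ (1 - l) ≤ f u := by
      have := hlc (u + s) v l hl0 hl1; rwa [hcomb1] at this
    have h2 : f (u + s) ^ (1 - l) * f v ^ l ≤ f (v + s) := by
      have := hlc (u + s) v (1 - l) (by linarith) (by linarith)
      have hll : 1 - (1 - l) = l := by ring
      rwa [hcomb2, hll] at this
    have hmul : (f (u + s) ^ l * f v ^ (1 - l)) * (f (u + s) ^ (1 - l) * f v ^ l)
        ≤ f u * f (v + s) := by
      apply mul_le_mul h1 h2 (mul_nonneg (Real.rpow_nonneg (hf _) _) (Real.rpow_nonneg (hf _) _)) (hf u)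
    calc f (u + s) * f v
        = (f (u + s) ^ l * f (u + s) ^ (1 - l)) * (f v ^ (1 - l) * f v ^ l) := by
          rw [← Real.rpow_add_of_nonneg (hf _) hl0 (by linarith),
            ← Real.rpow_add_of_nonneg (hf v) (by linarith) hl0]
          norm_num
      _ = (f (u + s) ^ l * f v ^ (1 - l)) * (f (u + s) ^ (1 - l) * f v ^ l) := by ring
      _ ≤ f u * f (v + s) := hmul

theorem logConcave_density_momentBounded
    (Ω : Type) [MeasurableSpace Ω] (P : Measure Ω) [IsProbabilityMeasure P]
    (X : Ω → ℝ) (f : ℝ → ℝ)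
    (hXmeas : Measurable X) (hXnonneg : ∀ ω, 0 ≤ X ω)
    (hf_nonneg : ∀ x, 0 ≤ f x) (hf_meas : Measurable f)
    (hdens : ∀ s : Set ℝ, MeasurableSet s → P (X ⁻¹' s) = ENNReal.ofReal (∫ x in s, f x))
    (hlogconcave : ∀ x y l : ℝ, 0 ≤ l → l ≤ 1 →
      f x ^ l * f y ^ (1 - l) ≤ f (l * x + (1 - l) * y)) :
    MomentBounded P X (∫ ω, X ω ∂P) := by
  classical
  have hkey := logconcave_key f hf_nonneg hlogconcave
  -- f is integrable with total integral 1
  have hPuniv : ENNReal.ofReal (∫ x, f x) = 1 := by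
    have := hdens univ MeasurableSet.univ
    simp only [preimage_univ, measure_univ, Measure.restrict_univ] at this
    exact this.symm
  have hfint : Integrable f := by
    by_contra h
    rw [integral_undef h] at hPuniv
    simp at hPuniv
  have hintf1 : ∫ x, f x = 1 := by rwa [ENNReal.ofReal_eq_one] at hPuniv
  -- the survival function of the density
  set G : ℝ → ℝ := fun a => ∫ x in Ici a, f x with hGdef
  have hGnonneg : ∀ a, 0 ≤ G a := fun a =>
    setIntegral_nonneg measurableSet_Ici fun x _ => hf_nonneg x
  have hfneg : ∫ x in Iio (0:ℝ), f x = 0 := by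
    have h0 : X ⁻¹' (Iio 0) = ∅ := by
      ext ω; simp [not_lt.2 (hXnonneg ω)]
    have h1 := hdens (Iio 0) measurableSet_Iio
    rw [h0, measure_empty] at h1
    have hle : ∫ x in Iio (0:ℝ), f x ≤ 0 := ENNReal.ofReal_eq_zero.mp h1.symm
    exact le_antisymm hle (setIntegral_nonneg measurableSet_Iio fun x _ => hf_nonneg x)
  have hG0 : G 0 = 1 := by
    have hsplit : ∫ x, f x = (∫ x in Iio (0:ℝ), f x) + ∫ x in Ici (0:ℝ), f x := by
      rw [← setIntegral_union (Iio_disjoint_Ici le_rfl) measurableSet_Ici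
        hfint.integrableOn hfint.integrableOn, Iio_union_Ici, setIntegral_univ]
    show (∫ x in Ici (0:ℝ), f x) = 1
    rw [hfneg, zero_add] at hsplit
    rw [← hsplit, hintf1]
  -- translation lemmas
  have htransIci : ∀ a s : ℝ, ∫ x in Ici a, f (x + s) = G (a + s) := by
    intro a s
    have h := (measurePreserving_add_right volume s).setIntegral_preimage_emb
      (measurableEmbedding_addRight s) f (Ici (a + s))
    have hpre : (· + s) ⁻¹' (Ici (a + s)) = Ici a := by
      ext x
      simp only [mem_preimage, mem_Ici]
      constructor <;> intro h' <;> linarith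
    rwa [hpre] at h
  -- NBU property
  have hNBU : ∀ s t : ℝ, 0 ≤ s → 0 ≤ t → G (t + s) ≤ G s * G t := by
    intro s t hs ht
    have hfints : Integrable (fun x => f (x + s)) := hfint.comp_add_right s
    have hfintsub : Integrable (fun x => f (x - s)) := hfint.comp_sub_right s
    set A : ℝ := ∫ x in Ico s (t + s), f x with hA
    set C : ℝ := ∫ x in Ico 0 t, f x with hC
    have hsplit1 : G s = A + G (t + s) := by
      show (∫ x in Ici s, f x) = _
      rw [← Ico_union_Ici_eq_Ici (le_add_of_nonneg_left ht : s ≤ t + s)]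
      exact setIntegral_union
        (disjoint_left.mpr fun x hx hx' => absurd hx.2 (not_lt.mpr hx'))
        measurableSet_Ici hfint.integrableOn hfint.integrableOn
    have hsplit2 : G 0 = C + G t := by
      show (∫ x in Ici (0:ℝ), f x) = _
      rw [← Ico_union_Ici_eq_Ici ht]
      exact setIntegral_union
        (disjoint_left.mpr fun x hx hx' => absurd hx.2 (not_lt.mpr hx'))
        measurableSet_Ici hfint.integrableOn hfint.integrableOn
    have hA' : ∫ v in Ico 0 t, f (v + s) = A := by
      have h := (measurePreserving_add_right volume s).setIntegral_preimage_emb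
        (measurableEmbedding_addRight s) f (Ico s (t + s))
      have hpre : (· + s) ⁻¹' (Ico s (t + s)) = Ico 0 t := by
        ext x
        simp only [mem_preimage, mem_Ico]
        constructor <;> intro h' <;> exact ⟨by linarith [h'.1], by linarith [h'.2]⟩
      rwa [hpre] at h
    have hGt' : ∫ u in Ici (t + s), f (u - s) = G t := by
      have h := (measurePreserving_add_right volume s).setIntegral_preimage_emb
        (measurableEmbedding_addRight s) (fun y => f (y - s)) (Ici (t + s))
      have hpre : (· + s) ⁻¹' (Ici (t + s)) = Ici t := by
        ext x
        simp only [mem_preimage, mem_Ici]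
        constructor <;> intro h' <;> linarith
      rw [hpre] at h
      simp only [add_sub_cancel_right] at h
      exact h.symm
    have hinner : ∀ u ∈ Ici (t + s), f u * C ≤ f (u - s) * A := by
      intro u hu
      rw [hC, ← hA', ← integral_const_mul, ← integral_const_mul]
      apply setIntegral_mono_on ((hfint.const_mul _).integrableOn)
        ((hfints.const_mul _).integrableOn) measurableSet_Ico
      intro v hv
      have hvle : v ≤ u - s := by
        have h1 := hv.2
        have h2 := mem_Ici.mp hu
        linarith
      have hk := hkey (u - s) v s hs hvle
      have heq : u - s + s = u := by ring
      rwa [heq] at hk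
    have hmain : G (t + s) * C ≤ A * G t := by
      have h1 : G (t + s) * C = ∫ u in Ici (t + s), f u * C := by
        rw [integral_mul_const]
      have h2 : (∫ u in Ici (t + s), f (u - s) * A) = G t * A := by
        rw [integral_mul_const, hGt']
      rw [h1, mul_comm A (G t), ← h2]
      apply setIntegral_mono_on ((hfint.mul_const _).integrableOn)
        ((hfintsub.mul_const _).integrableOn) measurableSet_Ici hinner
    have hCnonneg : 0 ≤ C := setIntegral_nonneg measurableSet_Ico fun x _ => hf_nonneg x
    calc G (t + s) = G (t + s) * G 0 := by rw [hG0, mul_one]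
      _ = G (t + s) * C + G (t + s) * G t := by rw [hsplit2]; ring
      _ ≤ A * G t + G (t + s) * G t := add_le_add_left hmain _
      _ = G s * G t := by rw [hsplit1]; ring
  -- the survival function of X
  set Gb : ℝ → ℝ≥0∞ := fun t => P {ω | t < X ω} with hGbdef
  have hGbG : ∀ t, Gb t = ENNReal.ofReal (G t) := by
    intro t
    have hpre : {ω | t < X ω} = X ⁻¹' (Ioi t) := rfl
    show P {ω | t < X ω} = _
    rw [hpre, hdens (Ioi t) measurableSet_Ioi]
    congr 1
    exact setIntegral_congr_set Ioi_ae_eq_Ici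
  have hGbanti : Antitone Gb := fun a b hab =>
    measure_mono fun ω h => lt_of_le_of_lt hab h
  have hGbmeas : Measurable Gb := hGbanti.measurable
  have hGbne : ∀ t, Gb t ≠ ∞ := fun t => measure_ne_top P _
  have hNBU' : ∀ s t : ℝ, 0 ≤ s → 0 ≤ t → Gb (t + s) ≤ Gb s * Gb t := by
    intro s t hs ht
    rw [hGbG, hGbG, hGbG, ← ENNReal.ofReal_mul (hGnonneg s)]
    exact ENNReal.ofReal_le_ofReal (hNBU s t hs ht)
  -- moments and layer-cake integrals
  set M : ℕ → ℝ≥0∞ := fun i => ∫⁻ ω, ENNReal.ofReal (X ω ^ i) ∂P with hMdef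
  set J : ℕ → ℝ≥0∞ := fun k => ∫⁻ t in Ioi 0, Gb t * ENNReal.ofReal (t ^ k) with hJdef
  have hJ0 : J 0 = ∫⁻ t in Ioi (0:ℝ), Gb t := by
    simp [hJdef]
  -- first moment is finite
  have hJ0ne : J 0 ≠ ∞ := by
    rw [hJ0]
    obtain ⟨t0, ht0pos, ht0lt⟩ : ∃ t0 : ℝ, 0 < t0 ∧ Gb t0 < 1 := by
      by_contra hcon
      push_neg at hcon
      have hone : ∀ n : ℕ, P (X ⁻¹' Iic ((n : ℝ) + 1)) = 0 := by
        intro n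
        have h1 : Gb ((n : ℝ) + 1) = 1 :=
          le_antisymm prob_le_one (hcon _ (by positivity))
        have hc : X ⁻¹' Iic ((n : ℝ) + 1) = (X ⁻¹' Ioi ((n : ℝ) + 1))ᶜ := by
          ext ω; simp [not_lt]
        rw [hc, prob_compl_eq_one_sub (hXmeas measurableSet_Ioi),
          show P (X ⁻¹' Ioi ((n : ℝ) + 1)) = Gb ((n : ℝ) + 1) from rfl, h1, tsub_self]
      have hcoveru : (⋃ n : ℕ, X ⁻¹' Iic ((n : ℝ) + 1)) = univ := by
        ext ω
        simp only [mem_iUnion, mem_preimage, mem_Iic, mem_univ, iff_true]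
        obtain ⟨n, hn⟩ := exists_nat_ge (X ω)
        exact ⟨n, by linarith⟩
      have hz := measure_iUnion_null fun n => hone n
      rw [hcoveru, measure_univ] at hz
      exact one_ne_zero hz
    set a : ℕ → ℝ := fun n => (n : ℝ) * t0 with hadef
    have hamono : Monotone a := fun m n hmn => by
      simp only [hadef]
      exact mul_le_mul_of_nonneg_right (Nat.cast_le.mpr hmn) ht0pos.le
    have hq : ∀ n : ℕ, Gb (a n) ≤ Gb t0 ^ n := by
      intro n
      induction n with
      | zero => simpa [hadef] using prob_le_one
      | succ m ih =>
        have h1 : a (m + 1) = t0 + a m := by simp only [hadef]; push_cast; ring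
        rw [h1]
        calc Gb (t0 + a m) ≤ Gb (a m) * Gb t0 :=
              hNBU' (a m) t0 (mul_nonneg (Nat.cast_nonneg m) ht0pos.le) ht0pos.le
          _ ≤ Gb t0 ^ m * Gb t0 := mul_le_mul_left ih _
          _ = Gb t0 ^ (m + 1) := (pow_succ _ _).symm
    have hcover : Ioi (0:ℝ) = ⋃ n : ℕ, Ioc (a n) (a (n + 1)) := by
      ext x
      simp only [mem_Ioi, mem_iUnion, mem_Ioc]
      constructor
      · intro hx
        set m := ⌈x / t0⌉₊ with hm
        have hm1 : 1 ≤ m := Nat.one_le_ceil_iff.mpr (div_pos hx ht0pos)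
        refine ⟨m - 1, ?_, ?_⟩
        · have h2 : ((m - 1 : ℕ) : ℝ) < x / t0 := by
            rw [← Nat.lt_ceil]
            omega
          calc a (m - 1) = ((m - 1 : ℕ) : ℝ) * t0 := rfl
            _ < (x / t0) * t0 := mul_lt_mul_of_pos_right h2 ht0pos
            _ = x := div_mul_cancel₀ x ht0pos.ne'
        · have h3 : x / t0 ≤ (m : ℝ) := Nat.le_ceil _
          have h4 : ((m - 1 : ℕ) : ℝ) + 1 = (m : ℝ) := by
            rw [Nat.cast_sub hm1]; ring
          calc x = (x / t0) * t0 := (div_mul_cancel₀ x ht0pos.ne').symm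
            _ ≤ (m : ℝ) * t0 := mul_le_mul_of_nonneg_right h3 ht0pos.le
            _ = a (m - 1 + 1) := by
                show _ = ((m - 1 + 1 : ℕ) : ℝ) * t0
                rw [Nat.sub_add_cancel hm1]
      · rintro ⟨n, hn1, hn2⟩
        have h5 : (0:ℝ) ≤ a n := mul_nonneg (Nat.cast_nonneg n) ht0pos.le
        linarith
    have hdisj : Pairwise (Function.onFun Disjoint fun n : ℕ => Ioc (a n) (a (n + 1))) := by
      simpa using hamono.pairwise_disjoint_on_Ioc_succ
    rw [hcover, lintegral_iUnion (fun n => measurableSet_Ioc) hdisj]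
    have hsum : ∀ n : ℕ, ∫⁻ x in Ioc (a n) (a (n + 1)), Gb x ≤ Gb t0 ^ n * ENNReal.ofReal t0 := by
      intro n
      have hbound : ∫⁻ x in Ioc (a n) (a (n + 1)), Gb x ≤ Gb (a n) * volume (Ioc (a n) (a (n + 1))) := by
        rw [← setLIntegral_const]
        exact setLIntegral_mono measurable_const fun x hx => hGbanti hx.1.le
      rw [Real.volume_Ioc] at hbound
      have hlen : a (n + 1) - a n = t0 := by simp only [hadef]; push_cast; ring
      rw [hlen] at hbound
      exact hbound.trans (mul_le_mul_left (hq n) _)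
    have htot : (∑' n : ℕ, ∫⁻ x in Ioc (a n) (a (n + 1)), Gb x)
        ≤ (1 - Gb t0)⁻¹ * ENNReal.ofReal t0 := by
      calc (∑' n : ℕ, ∫⁻ x in Ioc (a n) (a (n + 1)), Gb x)
          ≤ ∑' n : ℕ, Gb t0 ^ n * ENNReal.ofReal t0 := ENNReal.tsum_le_tsum hsum
        _ = (∑' n : ℕ, Gb t0 ^ n) * ENNReal.ofReal t0 := ENNReal.tsum_mul_right
        _ = (1 - Gb t0)⁻¹ * ENNReal.ofReal t0 := by rw [ENNReal.tsum_geometric]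
    refine ne_top_of_le_ne_top ?_ htot
    exact ENNReal.mul_ne_top
      (ENNReal.inv_ne_top.mpr (by simp [tsub_eq_zero_iff_le, not_le, ht0lt]))
      ENNReal.ofReal_ne_top
  -- layer-cake representation
  have hck : ∀ k : ℕ, ENNReal.ofReal ((k : ℝ) + 1) = (k : ℝ≥0∞) + 1 := by
    intro k
    rw [← Nat.cast_add_one, ENNReal.ofReal_natCast, Nat.cast_add_one]
  have hlayer : ∀ k : ℕ, M (k + 1) = ((k : ℝ≥0∞) + 1) * J k := by
    intro k
    have hg_intble : ∀ t > (0:ℝ), IntervalIntegrable (fun s => ((k : ℝ) + 1) * s ^ k) volume 0 t :=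
      fun t _ => (continuous_const.mul (continuous_pow k)).intervalIntegrable 0 t
    have hg_nn : ∀ᵐ t ∂(volume.restrict (Ioi (0:ℝ))), 0 ≤ ((k : ℝ) + 1) * t ^ k := by
      filter_upwards [ae_restrict_mem measurableSet_Ioi] with t ht
      have h0t : (0:ℝ) < t := ht
      positivity
    have h := lintegral_comp_eq_lintegral_meas_lt_mul P (f := X)
      (g := fun s => ((k : ℝ) + 1) * s ^ k) (.of_forall hXnonneg) hXmeas.aemeasurable
      hg_intble hg_nn
    have hL : ∀ ω, (∫ s in (0:ℝ)..X ω, ((k : ℝ) + 1) * s ^ k) = X ω ^ (k + 1) := by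
      intro ω
      rw [intervalIntegral.integral_const_mul, integral_pow]
      have hne : ((k : ℝ) + 1) ≠ 0 := by positivity
      push_cast
      field_simp
      simp
    have hLHS : M (k + 1) = ∫⁻ ω, ENNReal.ofReal (∫ s in (0:ℝ)..X ω, ((k : ℝ) + 1) * s ^ k) ∂P := by
      simp only [hMdef]
      exact lintegral_congr fun ω => by rw [hL ω]
    rw [hLHS, h, hJdef]
    rw [← lintegral_const_mul' _ _ (show ((k : ℝ≥0∞) + 1) ≠ ∞ by simp)]
    apply setLIntegral_congr_fun measurableSet_Ioi
    intro t ht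
    have h0t : (0:ℝ) < t := ht
    dsimp only
    rw [ENNReal.ofReal_mul (by positivity), hck k]
    show P (X ⁻¹' Ioi t) * _ = _
    rw [show P (X ⁻¹' Ioi t) = Gb t from rfl]
    ring
  have hM1J0 : M 1 = J 0 := by
    have := hlayer 0
    simpa using this
  -- core inequality
  have hcore : ∀ k : ℕ, J (k + 1) ≤ ((k : ℝ≥0∞) + 1) * (J k * J 0) := by
    intro k
    -- pointwise: ofReal (t^(k+1)) as an integral of s^k over (0, t]
    have hstep : ∀ t : ℝ, 0 < t → ENNReal.ofReal (t ^ (k + 1)) =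
        ((k : ℝ≥0∞) + 1) * ∫⁻ s in Ioc 0 t, ENNReal.ofReal (s ^ k) := by
      intro t ht
      have hint : IntegrableOn (fun s : ℝ => s ^ k) (Ioc 0 t) :=
        (continuous_pow k).integrableOn_Ioc
      have hnn : 0 ≤ᵐ[volume.restrict (Ioc 0 t)] fun s : ℝ => s ^ k := by
        filter_upwards [ae_restrict_mem measurableSet_Ioc] with s hs
        exact pow_nonneg hs.1.le k
      have h1 : ∫⁻ s in Ioc 0 t, ENNReal.ofReal (s ^ k) =
          ENNReal.ofReal (∫ s in Ioc 0 t, s ^ k) :=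
        (ofReal_integral_eq_lintegral_ofReal hint hnn).symm
      have h2 : ∫ s in Ioc 0 t, (s : ℝ) ^ k = t ^ (k + 1) / ((k : ℝ) + 1) := by
        rw [← intervalIntegral.integral_of_le ht.le, integral_pow]
        push_cast
        simp
      rw [h1, h2, ← hck k, ← ENNReal.ofReal_mul (by positivity)]
      congr 1
      field_simp
    -- the 2D region and kernel
    have hSmeas : MeasurableSet {p : ℝ × ℝ | 0 < p.2 ∧ p.2 ≤ p.1} :=
      (measurableSet_lt measurable_const measurable_snd).inter
        (measurableSet_le measurable_snd measurable_fst)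
    set F : ℝ × ℝ → ℝ≥0∞ :=
      ({p : ℝ × ℝ | 0 < p.2 ∧ p.2 ≤ p.1}).indicator
        (fun p => Gb p.1 * ENNReal.ofReal (p.2 ^ k)) with hFdef
    have hFmeas : Measurable F :=
      ((hGbmeas.comp measurable_fst).mul
        (ENNReal.measurable_ofReal.comp (measurable_snd.pow_const k))).indicator hSmeas
    have hB : ∀ t : ℝ, (∫⁻ s', F (t, s')) = ∫⁻ s' in Ioc 0 t, Gb t * ENNReal.ofReal (s' ^ k) := by
      intro t
      rw [← lintegral_indicator measurableSet_Ioc _]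
      apply lintegral_congr
      intro s'
      by_cases h : s' ∈ Ioc 0 t
      · rw [indicator_of_mem h, hFdef, indicator_of_mem (by exact ⟨h.1, h.2⟩)]
      · rw [indicator_of_notMem h, hFdef, indicator_of_notMem (by
          simp only [mem_setOf_eq]
          intro hc
          exact h ⟨hc.1, hc.2⟩)]
    have hB' : ∀ s' : ℝ, (∫⁻ t, F (t, s')) =
        (Ioi (0:ℝ)).indicator (fun s' => ENNReal.ofReal (s' ^ k) * ∫⁻ t in Ici s', Gb t) s' := by
      intro s'
      by_cases h : 0 < s'
      · rw [indicator_of_mem (mem_Ioi.mpr h)]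
        have hFe : ∀ t, F (t, s') = (Ici s').indicator (fun t => Gb t * ENNReal.ofReal (s' ^ k)) t := by
          intro t
          by_cases h2 : s' ≤ t
          · rw [hFdef, indicator_of_mem (by exact ⟨h, h2⟩), indicator_of_mem (mem_Ici.mpr h2)]
          · rw [hFdef, indicator_of_notMem (by
              simp only [mem_setOf_eq]
              intro hc
              exact h2 hc.2), indicator_of_notMem (by simpa using h2)]
        rw [lintegral_congr hFe, lintegral_indicator measurableSet_Ici _,
          lintegral_mul_const' _ _ ENNReal.ofReal_ne_top, mul_comm]
      · rw [indicator_of_notMem (by simpa using h)]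
        have hFe : ∀ t, F (t, s') = 0 := by
          intro t
          rw [hFdef]
          apply indicator_of_notMem
          simp only [mem_setOf_eq]
          intro hc
          exact h hc.1
        simp [hFe]
    -- the tail bound
    have htail : ∀ s' : ℝ, 0 ≤ s' → (∫⁻ t in Ici s', Gb t) ≤ Gb s' * J 0 := by
      intro s' hs'
      have h1 : (∫⁻ t in Ici s', Gb t) ≤ ∫⁻ t in Ici s', Gb s' * Gb (t - s') := by
        apply setLIntegral_mono ((hGbmeas.comp (measurable_id.sub_const s')).const_mul _)
        intro t ht
        have h2 := hNBU' s' (t - s') hs' (by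
          have := mem_Ici.mp ht
          linarith)
        have heq : t - s' + s' = t := by ring
        rwa [heq] at h2
      have h3 : (∫⁻ t in Ici s', Gb (t - s')) = ∫⁻ u in Ici (0:ℝ), Gb u := by
        have h := (measurePreserving_add_right volume s').setLIntegral_comp_preimage_emb
          (measurableEmbedding_addRight s') (fun y => Gb (y - s')) (Ici s')
        have hpre : (· + s') ⁻¹' (Ici s') = Ici (0:ℝ) := by
          ext x
          simp only [mem_preimage, mem_Ici]
          constructor <;> intro h' <;> linarith
        rw [hpre] at h
        simp only [add_sub_cancel_right] at h
        exact h.symm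
      have h4 : (∫⁻ u in Ici (0:ℝ), Gb u) = J 0 := by
        rw [hJ0]
        exact (setLIntegral_congr Ioi_ae_eq_Ici).symm
      calc (∫⁻ t in Ici s', Gb t) ≤ ∫⁻ t in Ici s', Gb s' * Gb (t - s') := h1
        _ = Gb s' * ∫⁻ t in Ici s', Gb (t - s') := lintegral_const_mul' _ _ (hGbne s')
        _ = Gb s' * J 0 := by rw [h3, h4]
    -- main chain
    have hchain1 : J (k + 1) =
        ((k : ℝ≥0∞) + 1) * ∫⁻ t in Ioi 0, ∫⁻ s' in Ioc 0 t, Gb t * ENNReal.ofReal (s' ^ k) := by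
      rw [hJdef]
      rw [← lintegral_const_mul' _ _ (show ((k : ℝ≥0∞) + 1) ≠ ∞ by simp)]
      apply setLIntegral_congr_fun measurableSet_Ioi
      intro t ht
      calc Gb t * ENNReal.ofReal (t ^ (k + 1))
          = Gb t * (((k : ℝ≥0∞) + 1) * ∫⁻ s' in Ioc 0 t, ENNReal.ofReal (s' ^ k)) := by
            rw [hstep t ht]
        _ = ((k : ℝ≥0∞) + 1) * (Gb t * ∫⁻ s' in Ioc 0 t, ENNReal.ofReal (s' ^ k)) := by ring
        _ = ((k : ℝ≥0∞) + 1) * ∫⁻ s' in Ioc 0 t, Gb t * ENNReal.ofReal (s' ^ k) := by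
            rw [lintegral_const_mul' (Gb t) _ (hGbne t)]
    have hchain2 : (∫⁻ t in Ioi 0, ∫⁻ s' in Ioc 0 t, Gb t * ENNReal.ofReal (s' ^ k))
        = ∫⁻ t, ∫⁻ s', F (t, s') := by
      rw [← lintegral_indicator measurableSet_Ioi _]
      apply lintegral_congr
      intro t
      by_cases h : t ∈ Ioi 0
      · rw [indicator_of_mem h]
        exact (hB t).symm
      · rw [indicator_of_notMem h]
        have hFe : ∀ s', F (t, s') = 0 := by
          intro s'
          rw [hFdef]
          apply indicator_of_notMem
          simp only [mem_setOf_eq]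
          intro hc
          exact h (mem_Ioi.mpr (lt_of_lt_of_le hc.1 hc.2))
        simp [hFe]
    have hswap : (∫⁻ t, ∫⁻ s', F (t, s')) = ∫⁻ s', ∫⁻ t, F (t, s') := by
      exact lintegral_lintegral_swap hFmeas.aemeasurable
    have hchain3 : (∫⁻ s', ∫⁻ t, F (t, s'))
        = ∫⁻ s' in Ioi 0, ENNReal.ofReal (s' ^ k) * ∫⁻ t in Ici s', Gb t := by
      rw [← lintegral_indicator measurableSet_Ioi _]
      exact lintegral_congr hB'
    have hbnd : (∫⁻ s' in Ioi 0, ENNReal.ofReal (s' ^ k) * ∫⁻ t in Ici s', Gb t)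
        ≤ ∫⁻ s' in Ioi 0, ENNReal.ofReal (s' ^ k) * (Gb s' * J 0) := by
      apply setLIntegral_mono
      · exact (ENNReal.measurable_ofReal.comp (measurable_id.pow_const k)).mul
          (hGbmeas.mul measurable_const)
      · intro s' hs'
        exact mul_le_mul_right (htail s' (le_of_lt hs')) _
    have hpull : (∫⁻ s' in Ioi 0, ENNReal.ofReal (s' ^ k) * (Gb s' * J 0)) = J k * J 0 := by
      calc (∫⁻ s' in Ioi 0, ENNReal.ofReal (s' ^ k) * (Gb s' * J 0))
          = ∫⁻ s' in Ioi 0, (Gb s' * ENNReal.ofReal (s' ^ k)) * J 0 := by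
            apply lintegral_congr
            intro s'
            ring
        _ = (∫⁻ s' in Ioi 0, Gb s' * ENNReal.ofReal (s' ^ k)) * J 0 :=
            lintegral_mul_const' _ _ hJ0ne
        _ = J k * J 0 := by rw [hJdef]
    calc J (k + 1)
        = ((k : ℝ≥0∞) + 1) * ∫⁻ t in Ioi 0, ∫⁻ s' in Ioc 0 t, Gb t * ENNReal.ofReal (s' ^ k) :=
          hchain1
      _ = ((k : ℝ≥0∞) + 1) * ∫⁻ s' in Ioi 0, ENNReal.ofReal (s' ^ k) * ∫⁻ t in Ici s', Gb t := by
          rw [hchain2, hswap, hchain3]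
      _ ≤ ((k : ℝ≥0∞) + 1) * ∫⁻ s' in Ioi 0, ENNReal.ofReal (s' ^ k) * (Gb s' * J 0) :=
          mul_le_mul_right hbnd _
      _ = ((k : ℝ≥0∞) + 1) * (J k * J 0) := by rw [hpull]
  -- finiteness
  have hJne : ∀ k, J k ≠ ∞ := by
    intro k
    induction k with
    | zero => exact hJ0ne
    | succ n ih =>
      exact ne_top_of_le_ne_top (by
        exact ENNReal.mul_ne_top (by simp) (ENNReal.mul_ne_top ih hJ0ne)) (hcore n)
  have hM0 : M 0 = 1 := by simp [hMdef]
  have hMne : ∀ i, M i ≠ ∞ := by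
    intro i
    cases i with
    | zero => rw [hM0]; exact one_ne_top
    | succ k => rw [hlayer k]; exact ENNReal.mul_ne_top (by simp) (hJne k)
  -- integrability
  have hInt : ∀ i : ℕ, Integrable (fun ω => |X ω| ^ i) P := by
    intro i
    have hmeq : (fun ω => |X ω| ^ i) = fun ω => X ω ^ i :=
      funext fun ω => by rw [abs_of_nonneg (hXnonneg ω)]
    rw [hmeq]
    refine ⟨(hXmeas.pow_const i).aestronglyMeasurable, ?_⟩
    rw [hasFiniteIntegral_iff_ofReal (.of_forall fun ω => pow_nonneg (hXnonneg ω) i)]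
    exact lt_of_le_of_ne le_top (hMne i)
  have hIeq : ∀ i : ℕ, ∫ ω, |X ω| ^ i ∂P = (M i).toReal := by
    intro i
    have hmeq : (fun ω => |X ω| ^ i) = fun ω => X ω ^ i :=
      funext fun ω => by rw [abs_of_nonneg (hXnonneg ω)]
    rw [hmeq, integral_eq_lintegral_of_nonneg_ae
      (.of_forall fun ω => pow_nonneg (hXnonneg ω) i)
      (hXmeas.pow_const i).aestronglyMeasurable]
  have hLeq : ∫ ω, X ω ∂P = (M 1).toReal := by
    have := hIeq 1
    simpa [abs_of_nonneg (hXnonneg _)] using this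
  refine ⟨hInt, ?_⟩
  intro i hi
  obtain ⟨j, rfl⟩ : ∃ j, i = j + 1 := ⟨i - 1, (Nat.succ_pred_eq_of_pos hi).symm⟩
  have hkey2 : M (j + 1) ≤ ((j : ℝ≥0∞) + 1) * M 1 * M j := by
    cases j with
    | zero =>
      rw [hM0]
      simp
    | succ k =>
      rw [hlayer (k + 1), hlayer k, hM1J0]
      calc (((k + 1 : ℕ) : ℝ≥0∞) + 1) * J (k + 1)
          ≤ (((k + 1 : ℕ) : ℝ≥0∞) + 1) * (((k : ℝ≥0∞) + 1) * (J k * J 0)) :=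
            mul_le_mul_right (hcore k) _
        _ = (((k + 1 : ℕ) : ℝ≥0∞) + 1) * J 0 * (((k : ℝ≥0∞) + 1) * J k) := by
            push_cast; ring
  have hj1 : (j + 1) - 1 = j := by omega
  rw [hj1, hIeq, hIeq, hLeq]
  have hrhs_ne : ((j : ℝ≥0∞) + 1) * M 1 * M j ≠ ∞ :=
    ENNReal.mul_ne_top (ENNReal.mul_ne_top (by simp) (hMne 1)) (hMne j)
  calc (M (j + 1)).toReal ≤ (((j : ℝ≥0∞) + 1) * M 1 * M j).toReal :=
        ENNReal.toReal_mono hrhs_ne hkey2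
    _ = ((j : ℝ) + 1) * (M 1).toReal * (M j).toReal := by
        have hto : ((j : ℝ≥0∞) + 1).toReal = (j : ℝ) + 1 := by
          rw [ENNReal.toReal_add (by simp) one_ne_top]; simp
        rw [ENNReal.toReal_mul, ENNReal.toReal_mul, hto]
    _ = ↑(j + 1) * (M 1).toReal * (M j).toReal := by push_cast; ring
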